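/- The Lovász theta number of the circulant graph $Ci_8(1,4)$ equals $2 + \sqrt{2}$. -/

import Mathlib

namespace LovaszCi8

open Matrix

lemma psd_outer {n : Type*} [Fintype n] (v : n → ℝ) : (Matrix.vecMulVec v v).PosSemidef := by
  have h : Matrix.vecMulVec v v = (Matrix.replicateRow Unit v)ᴴ * Matrix.replicateRow Unit v := by
    ext i j
    simp [Matrix.mul_apply, Matrix.vecMulVec_apply, Matrix.conjTranspose_apply, Matrix.replicateRow_apply]
  rw [h]; exact Matrix.posSemidef_conjTranspose_mul_self _

lemma psd_smul {n : Type*} [Fintype n] {M : Matrix n n ℝ} (h : M.PosSemidef) {a : ℝ}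
    (ha : 0 ≤ a) : (a • M).PosSemidef := by
  refine Matrix.PosSemidef.of_dotProduct_mulVec_nonneg ?_ (fun x => ?_)
  · rw [Matrix.IsHermitian, Matrix.conjTranspose_smul, star_trivial, h.1]
  · rw [Matrix.smul_mulVec, dotProduct_smul, smul_eq_mul]
    exact mul_nonneg ha (h.dotProduct_mulVec_nonneg x)

lemma sum8 (f : ZMod 8 → ℝ) : ∑ i, f i = f 0 + f 1 + f 2 + f 3 + f 4 + f 5 + f 6 + f 7 := by
  show ∑ i : Fin 8, f i = _
  exact Fin.sum_univ_eight f

noncomputable def wtab : ZMod 8 → ℝ := fun i =>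
  if i = 0 then 1 else if i = 1 then -1 else if i = 2 then 1 else if i = 3 then -1 else if i = 4 then 1 else if i = 5 then -1 else if i = 6 then 1 else -1
noncomputable def ctab : ZMod 8 → ℝ := fun i =>
  if i = 0 then 1 else if i = 1 then -Real.sqrt 2/2 else if i = 2 then 0 else if i = 3 then Real.sqrt 2/2 else if i = 4 then -1 else if i = 5 then Real.sqrt 2/2 else if i = 6 then 0 else -Real.sqrt 2/2
noncomputable def stab : ZMod 8 → ℝ := fun i =>
  if i = 0 then 0 else if i = 1 then Real.sqrt 2/2 else if i = 2 then -1 else if i = 3 then Real.sqrt 2/2 else if i = 4 then 0 else if i = 5 then -Real.sqrt 2/2 else if i = 6 then 1 else -Real.sqrt 2/2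
noncomputable def q1tab : ZMod 8 → ℝ := fun i =>
  if i = 0 then Real.sqrt 2 else if i = 1 then 1 else if i = 2 then 0 else if i = 3 then -1 else if i = 4 then -Real.sqrt 2 else if i = 5 then -1 else if i = 6 then 0 else 1
noncomputable def q2tab : ZMod 8 → ℝ := fun i =>
  if i = 0 then 0 else if i = 1 then 1 else if i = 2 then Real.sqrt 2 else if i = 3 then 1 else if i = 4 then 0 else if i = 5 then -1 else if i = 6 then -Real.sqrt 2 else -1
noncomputable def q3tab : ZMod 8 → ℝ := fun i =>
  if i = 0 then 1 else if i = 1 then 0 else if i = 2 then -1 else if i = 3 then 0 else if i = 4 then 1 else if i = 5 then 0 else if i = 6 then -1 else 0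
noncomputable def q4tab : ZMod 8 → ℝ := fun i =>
  if i = 0 then 0 else if i = 1 then 1 else if i = 2 then 0 else if i = 3 then -1 else if i = 4 then 0 else if i = 5 then 1 else if i = 6 then 0 else -1

lemma wtab_0 : wtab 0 = 1 := by
  simp (config := { decide := true }) [wtab]
lemma wtab_1 : wtab 1 = -1 := by
  simp (config := { decide := true }) [wtab]
lemma wtab_2 : wtab 2 = 1 := by
  simp (config := { decide := true }) [wtab]
lemma wtab_3 : wtab 3 = -1 := by
  simp (config := { decide := true }) [wtab]
lemma wtab_4 : wtab 4 = 1 := by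
  simp (config := { decide := true }) [wtab]
lemma wtab_5 : wtab 5 = -1 := by
  simp (config := { decide := true }) [wtab]
lemma wtab_6 : wtab 6 = 1 := by
  simp (config := { decide := true }) [wtab]
lemma wtab_7 : wtab 7 = -1 := by
  simp (config := { decide := true }) [wtab]
lemma ctab_0 : ctab 0 = 1 := by
  simp (config := { decide := true }) [ctab]
lemma ctab_1 : ctab 1 = -Real.sqrt 2/2 := by
  simp (config := { decide := true }) [ctab]
lemma ctab_2 : ctab 2 = 0 := by
  simp (config := { decide := true }) [ctab]
lemma ctab_3 : ctab 3 = Real.sqrt 2/2 := by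
  simp (config := { decide := true }) [ctab]
lemma ctab_4 : ctab 4 = -1 := by
  simp (config := { decide := true }) [ctab]
lemma ctab_5 : ctab 5 = Real.sqrt 2/2 := by
  simp (config := { decide := true }) [ctab]
lemma ctab_6 : ctab 6 = 0 := by
  simp (config := { decide := true }) [ctab]
lemma ctab_7 : ctab 7 = -Real.sqrt 2/2 := by
  simp (config := { decide := true }) [ctab]
lemma stab_0 : stab 0 = 0 := by
  simp (config := { decide := true }) [stab]
lemma stab_1 : stab 1 = Real.sqrt 2/2 := by
  simp (config := { decide := true }) [stab]
lemma stab_2 : stab 2 = -1 := by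
  simp (config := { decide := true }) [stab]
lemma stab_3 : stab 3 = Real.sqrt 2/2 := by
  simp (config := { decide := true }) [stab]
lemma stab_4 : stab 4 = 0 := by
  simp (config := { decide := true }) [stab]
lemma stab_5 : stab 5 = -Real.sqrt 2/2 := by
  simp (config := { decide := true }) [stab]
lemma stab_6 : stab 6 = 1 := by
  simp (config := { decide := true }) [stab]
lemma stab_7 : stab 7 = -Real.sqrt 2/2 := by
  simp (config := { decide := true }) [stab]
lemma q1tab_0 : q1tab 0 = Real.sqrt 2 := by
  simp (config := { decide := true }) [q1tab]
lemma q1tab_1 : q1tab 1 = 1 := by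
  simp (config := { decide := true }) [q1tab]
lemma q1tab_2 : q1tab 2 = 0 := by
  simp (config := { decide := true }) [q1tab]
lemma q1tab_3 : q1tab 3 = -1 := by
  simp (config := { decide := true }) [q1tab]
lemma q1tab_4 : q1tab 4 = -Real.sqrt 2 := by
  simp (config := { decide := true }) [q1tab]
lemma q1tab_5 : q1tab 5 = -1 := by
  simp (config := { decide := true }) [q1tab]
lemma q1tab_6 : q1tab 6 = 0 := by
  simp (config := { decide := true }) [q1tab]
lemma q1tab_7 : q1tab 7 = 1 := by
  simp (config := { decide := true }) [q1tab]
lemma q2tab_0 : q2tab 0 = 0 := by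
  simp (config := { decide := true }) [q2tab]
lemma q2tab_1 : q2tab 1 = 1 := by
  simp (config := { decide := true }) [q2tab]
lemma q2tab_2 : q2tab 2 = Real.sqrt 2 := by
  simp (config := { decide := true }) [q2tab]
lemma q2tab_3 : q2tab 3 = 1 := by
  simp (config := { decide := true }) [q2tab]
lemma q2tab_4 : q2tab 4 = 0 := by
  simp (config := { decide := true }) [q2tab]
lemma q2tab_5 : q2tab 5 = -1 := by
  simp (config := { decide := true }) [q2tab]
lemma q2tab_6 : q2tab 6 = -Real.sqrt 2 := by
  simp (config := { decide := true }) [q2tab]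
lemma q2tab_7 : q2tab 7 = -1 := by
  simp (config := { decide := true }) [q2tab]
lemma q3tab_0 : q3tab 0 = 1 := by
  simp (config := { decide := true }) [q3tab]
lemma q3tab_1 : q3tab 1 = 0 := by
  simp (config := { decide := true }) [q3tab]
lemma q3tab_2 : q3tab 2 = -1 := by
  simp (config := { decide := true }) [q3tab]
lemma q3tab_3 : q3tab 3 = 0 := by
  simp (config := { decide := true }) [q3tab]
lemma q3tab_4 : q3tab 4 = 1 := by
  simp (config := { decide := true }) [q3tab]
lemma q3tab_5 : q3tab 5 = 0 := by
  simp (config := { decide := true }) [q3tab]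
lemma q3tab_6 : q3tab 6 = -1 := by
  simp (config := { decide := true }) [q3tab]
lemma q3tab_7 : q3tab 7 = 0 := by
  simp (config := { decide := true }) [q3tab]
lemma q4tab_0 : q4tab 0 = 0 := by
  simp (config := { decide := true }) [q4tab]
lemma q4tab_1 : q4tab 1 = 1 := by
  simp (config := { decide := true }) [q4tab]
lemma q4tab_2 : q4tab 2 = 0 := by
  simp (config := { decide := true }) [q4tab]
lemma q4tab_3 : q4tab 3 = -1 := by
  simp (config := { decide := true }) [q4tab]
lemma q4tab_4 : q4tab 4 = 0 := by
  simp (config := { decide := true }) [q4tab]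
lemma q4tab_5 : q4tab 5 = 1 := by
  simp (config := { decide := true }) [q4tab]
lemma q4tab_6 : q4tab 6 = 0 := by
  simp (config := { decide := true }) [q4tab]
lemma q4tab_7 : q4tab 7 = -1 := by
  simp (config := { decide := true }) [q4tab]

noncomputable def vv : Fin 1 ⊕ ZMod 8 → ℝ := Sum.elim (fun _ => 1) (fun _ => (2 + Real.sqrt 2)/8)
noncomputable def ww : Fin 1 ⊕ ZMod 8 → ℝ := Sum.elim (fun _ => 0) wtab
noncomputable def cc : Fin 1 ⊕ ZMod 8 → ℝ := Sum.elim (fun _ => 0) ctab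
noncomputable def tt : Fin 1 ⊕ ZMod 8 → ℝ := Sum.elim (fun _ => 0) stab
noncomputable def pp : Fin 1 ⊕ ZMod 8 → ℝ := Sum.elim (fun _ => 2 + Real.sqrt 2) (fun _ => -1)
noncomputable def qq1 : Fin 1 ⊕ ZMod 8 → ℝ := Sum.elim (fun _ => 0) q1tab
noncomputable def qq2 : Fin 1 ⊕ ZMod 8 → ℝ := Sum.elim (fun _ => 0) q2tab
noncomputable def qq3 : Fin 1 ⊕ ZMod 8 → ℝ := Sum.elim (fun _ => 0) q3tab
noncomputable def qq4 : Fin 1 ⊕ ZMod 8 → ℝ := Sum.elim (fun _ => 0) q4tab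

noncomputable def XX : Matrix (Fin 1 ⊕ ZMod 8) (Fin 1 ⊕ ZMod 8) ℝ :=
  Matrix.vecMulVec vv vv + ((1:ℝ)/32) • Matrix.vecMulVec ww ww +
    ((2 + Real.sqrt 2)/16) • Matrix.vecMulVec cc cc + ((2 + Real.sqrt 2)/16) • Matrix.vecMulVec tt tt

lemma XXent (i j : ZMod 8) : XX (Sum.inr i) (Sum.inr j) =
    ((2 + Real.sqrt 2)/8) * ((2 + Real.sqrt 2)/8) + (1/32) * (wtab i * wtab j) +
      ((2 + Real.sqrt 2)/16) * (ctab i * ctab j) + ((2 + Real.sqrt 2)/16) * (stab i * stab j) := by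
  simp [XX, vv, ww, cc, tt, Matrix.add_apply, Matrix.smul_apply, Matrix.vecMulVec_apply,
    smul_eq_mul]
  try ring

lemma XX0ent (j : ZMod 8) : XX (Sum.inl 0) (Sum.inr j) = (2 + Real.sqrt 2)/8 := by
  simp [XX, vv, ww, cc, tt, Matrix.add_apply, Matrix.smul_apply, Matrix.vecMulVec_apply,
    smul_eq_mul]

lemma hs : (Real.sqrt 2) ^ 2 = 2 := Real.sq_sqrt (by norm_num)

lemma zmod8cases : ∀ k : ZMod 8, k = 0 ∨ k = 1 ∨ k = 2 ∨ k = 3 ∨ k = 4 ∨ k = 5 ∨ k = 6 ∨ k = 7 := by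
  decide

end LovaszCi8

set_option maxHeartbeats 2000000 in
open LovaszCi8 Matrix in
/-- The Lovász theta number of the circulant graph `Ci_8(1,4)` equals `2 + √2`. -/
theorem lovasz_theta_Ci8_1_4 :
    IsGreatest
      {s : ℝ | ∃ X : Matrix (Fin 1 ⊕ ZMod 8) (Fin 1 ⊕ ZMod 8) ℝ,
        X.PosSemidef ∧
        X (Sum.inl 0) (Sum.inl 0) = 1 ∧
        (∀ i, X (Sum.inr i) (Sum.inr i) = X (Sum.inl 0) (Sum.inr i)) ∧
        (∀ i j : ZMod 8, (i - j = 1 ∨ i - j = 4 ∨ i - j = 7) →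
          X (Sum.inr i) (Sum.inr j) = 0) ∧
        s = ∑ i, X (Sum.inr i) (Sum.inr i)}
      (2 + Real.sqrt 2) := by
  constructor
  · -- membership
    refine ⟨XX, ?_, ?_, ?_, ?_, ?_⟩
    · exact ((((psd_outer vv).add (psd_smul (psd_outer ww) (by norm_num))).add
        (psd_smul (psd_outer cc) (by positivity))).add (psd_smul (psd_outer tt) (by positivity)))
    · simp [XX, vv, ww, cc, tt, Matrix.add_apply, Matrix.smul_apply, Matrix.vecMulVec_apply,
        smul_eq_mul]
    · intro i
      rcases zmod8cases i with rfl|rfl|rfl|rfl|rfl|rfl|rfl|rfl <;>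
        simp only [XXent, XX0ent, wtab_0, wtab_1, wtab_2, wtab_3, wtab_4, wtab_5, wtab_6, wtab_7, ctab_0, ctab_1, ctab_2, ctab_3, ctab_4, ctab_5, ctab_6, ctab_7, stab_0, stab_1, stab_2, stab_3, stab_4, stab_5, stab_6, stab_7] <;>
        first | linear_combination (((1/64) : ℝ)) * hs | linear_combination (((5/64)+(1/32)*Real.sqrt 2 : ℝ)) * hs
    · intro i j hij
      rcases zmod8cases i with rfl|rfl|rfl|rfl|rfl|rfl|rfl|rfl <;>
        rcases zmod8cases j with rfl|rfl|rfl|rfl|rfl|rfl|rfl|rfl <;>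
        first
          | exact absurd hij (by decide)
          | (simp only [XXent, wtab_0, wtab_1, wtab_2, wtab_3, wtab_4, wtab_5, wtab_6, wtab_7, ctab_0, ctab_1, ctab_2, ctab_3, ctab_4, ctab_5, ctab_6, ctab_7, stab_0, stab_1, stab_2, stab_3, stab_4, stab_5, stab_6, stab_7]
             first | linear_combination (((-1/64) : ℝ)) * hs | linear_combination (((-3/64)+(-1/32)*Real.sqrt 2 : ℝ)) * hs | linear_combination (((1/64) : ℝ)) * hs)
    · rw [sum8]
      simp only [XXent, wtab_0, wtab_1, wtab_2, wtab_3, wtab_4, wtab_5, wtab_6, wtab_7, ctab_0, ctab_1, ctab_2, ctab_3, ctab_4, ctab_5, ctab_6, ctab_7, stab_0, stab_1, stab_2, stab_3, stab_4, stab_5, stab_6, stab_7]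
      linear_combination (((-3/8)+(-1/8)*Real.sqrt 2 : ℝ)) * hs
  · -- upper bound
    rintro x ⟨X, hX, h00, hdg, hed, rfl⟩
    have hsym : ∀ a b, X a b = X b a := by
      intro a b
      have h := congrFun (congrFun hX.1 a) b
      rw [Matrix.conjTranspose_apply, star_trivial] at h
      exact h.symm
    have h2 : Real.sqrt 2 ^ 2 = 2 := hs
    have h2n : (0:ℝ) ≤ Real.sqrt 2 := Real.sqrt_nonneg 2
    have hub : Real.sqrt 2 ≤ 2 := by nlinarith
    have hlb : 1 ≤ Real.sqrt 2 := by nlinarith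
    have key : ((2 - Real.sqrt 2)/2) * (star pp ⬝ᵥ X *ᵥ pp)
        + ((Real.sqrt 2 - 1)/2) * (star qq1 ⬝ᵥ X *ᵥ qq1)
        + ((Real.sqrt 2 - 1)/2) * (star qq2 ⬝ᵥ X *ᵥ qq2)
        + ((2 - Real.sqrt 2)/2) * (star qq3 ⬝ᵥ X *ᵥ qq3)
        + ((2 - Real.sqrt 2)/2) * (star qq4 ⬝ᵥ X *ᵥ qq4)
        = (2 + Real.sqrt 2) - ∑ i, X (Sum.inr i) (Sum.inr i) := by
      have hst : ∀ q : Fin 1 ⊕ ZMod 8 → ℝ, star q = q := fun q => funext fun a => star_trivial _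
      simp only [hst, dotProduct, Matrix.mulVec, Fintype.sum_sum_type, Fin.sum_univ_one,
        sum8, pp, qq1, qq2, qq3, qq4, Sum.elim_inl, Sum.elim_inr, wtab_0, wtab_1, wtab_2, wtab_3, wtab_4, wtab_5, wtab_6, wtab_7, ctab_0, ctab_1, ctab_2, ctab_3, ctab_4, ctab_5, ctab_6, ctab_7, stab_0, stab_1, stab_2, stab_3, stab_4, stab_5, stab_6, stab_7, q1tab_0, q1tab_1, q1tab_2, q1tab_3, q1tab_4, q1tab_5, q1tab_6, q1tab_7, q2tab_0, q2tab_1, q2tab_2, q2tab_3, q2tab_4, q2tab_5, q2tab_6, q2tab_7, q3tab_0, q3tab_1, q3tab_2, q3tab_3, q3tab_4, q3tab_5, q3tab_6, q3tab_7, q4tab_0, q4tab_1, q4tab_2, q4tab_3, q4tab_4, q4tab_5, q4tab_6, q4tab_7]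
      linear_combination
        (((4)+(2)*Real.sqrt 2+(-1)*Real.sqrt 2^2+(-1/2)*Real.sqrt 2^3 : ℝ)) * h00 +
        (((1)+(-1)*Real.sqrt 2+(1/2)*Real.sqrt 2^2 : ℝ)) * (hed 0 1 (by decide)) +
        (((2)+(-1)*Real.sqrt 2+(1/2)*Real.sqrt 2^2+(-1/2)*Real.sqrt 2^3 : ℝ)) * (hed 0 4 (by decide)) +
        (((1)+(-1)*Real.sqrt 2+(1/2)*Real.sqrt 2^2 : ℝ)) * (hed 0 7 (by decide)) +
        (((1)+(-1)*Real.sqrt 2+(1/2)*Real.sqrt 2^2 : ℝ)) * (hed 1 0 (by decide)) +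
        (((1)+(-1)*Real.sqrt 2+(1/2)*Real.sqrt 2^2 : ℝ)) * (hed 1 2 (by decide)) +
        (((3)+(-2)*Real.sqrt 2 : ℝ)) * (hed 1 5 (by decide)) +
        (((1)+(-1)*Real.sqrt 2+(1/2)*Real.sqrt 2^2 : ℝ)) * (hed 2 1 (by decide)) +
        (((1)+(-1)*Real.sqrt 2+(1/2)*Real.sqrt 2^2 : ℝ)) * (hed 2 3 (by decide)) +
        (((2)+(-1)*Real.sqrt 2+(1/2)*Real.sqrt 2^2+(-1/2)*Real.sqrt 2^3 : ℝ)) * (hed 2 6 (by decide)) +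
        (((1)+(-1)*Real.sqrt 2+(1/2)*Real.sqrt 2^2 : ℝ)) * (hed 3 2 (by decide)) +
        (((1)+(-1)*Real.sqrt 2+(1/2)*Real.sqrt 2^2 : ℝ)) * (hed 3 4 (by decide)) +
        (((3)+(-2)*Real.sqrt 2 : ℝ)) * (hed 3 7 (by decide)) +
        (((2)+(-1)*Real.sqrt 2+(1/2)*Real.sqrt 2^2+(-1/2)*Real.sqrt 2^3 : ℝ)) * (hed 4 0 (by decide)) +
        (((1)+(-1)*Real.sqrt 2+(1/2)*Real.sqrt 2^2 : ℝ)) * (hed 4 3 (by decide)) +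
        (((1)+(-1)*Real.sqrt 2+(1/2)*Real.sqrt 2^2 : ℝ)) * (hed 4 5 (by decide)) +
        (((3)+(-2)*Real.sqrt 2 : ℝ)) * (hed 5 1 (by decide)) +
        (((1)+(-1)*Real.sqrt 2+(1/2)*Real.sqrt 2^2 : ℝ)) * (hed 5 4 (by decide)) +
        (((1)+(-1)*Real.sqrt 2+(1/2)*Real.sqrt 2^2 : ℝ)) * (hed 5 6 (by decide)) +
        (((2)+(-1)*Real.sqrt 2+(1/2)*Real.sqrt 2^2+(-1/2)*Real.sqrt 2^3 : ℝ)) * (hed 6 2 (by decide)) +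
        (((1)+(-1)*Real.sqrt 2+(1/2)*Real.sqrt 2^2 : ℝ)) * (hed 6 5 (by decide)) +
        (((1)+(-1)*Real.sqrt 2+(1/2)*Real.sqrt 2^2 : ℝ)) * (hed 6 7 (by decide)) +
        (((1)+(-1)*Real.sqrt 2+(1/2)*Real.sqrt 2^2 : ℝ)) * (hed 7 0 (by decide)) +
        (((3)+(-2)*Real.sqrt 2 : ℝ)) * (hed 7 3 (by decide)) +
        (((1)+(-1)*Real.sqrt 2+(1/2)*Real.sqrt 2^2 : ℝ)) * (hed 7 6 (by decide)) +
        (((-2)+(1/2)*Real.sqrt 2^2 : ℝ)) * (hsym (Sum.inr 0) (Sum.inl 0)) +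
        (((-2)+(1/2)*Real.sqrt 2^2 : ℝ)) * (hsym (Sum.inr 1) (Sum.inl 0)) +
        (((-2)+(1/2)*Real.sqrt 2^2 : ℝ)) * (hsym (Sum.inr 2) (Sum.inl 0)) +
        (((-2)+(1/2)*Real.sqrt 2^2 : ℝ)) * (hsym (Sum.inr 3) (Sum.inl 0)) +
        (((1)+(-1/2)*Real.sqrt 2^2 : ℝ)) * (hsym (Sum.inr 3) (Sum.inr 0)) +
        (((-2)+(1/2)*Real.sqrt 2^2 : ℝ)) * (hsym (Sum.inr 4) (Sum.inl 0)) +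
        (((1)+(-1/2)*Real.sqrt 2^2 : ℝ)) * (hsym (Sum.inr 4) (Sum.inr 1)) +
        (((-2)+(1/2)*Real.sqrt 2^2 : ℝ)) * (hsym (Sum.inr 5) (Sum.inl 0)) +
        (((1)+(-1/2)*Real.sqrt 2^2 : ℝ)) * (hsym (Sum.inr 5) (Sum.inr 0)) +
        (((1)+(-1/2)*Real.sqrt 2^2 : ℝ)) * (hsym (Sum.inr 5) (Sum.inr 2)) +
        (((-2)+(1/2)*Real.sqrt 2^2 : ℝ)) * (hsym (Sum.inr 6) (Sum.inl 0)) +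
        (((1)+(-1/2)*Real.sqrt 2^2 : ℝ)) * (hsym (Sum.inr 6) (Sum.inr 1)) +
        (((1)+(-1/2)*Real.sqrt 2^2 : ℝ)) * (hsym (Sum.inr 6) (Sum.inr 3)) +
        (((-2)+(1/2)*Real.sqrt 2^2 : ℝ)) * (hsym (Sum.inr 7) (Sum.inl 0)) +
        (((1)+(-1/2)*Real.sqrt 2^2 : ℝ)) * (hsym (Sum.inr 7) (Sum.inr 2)) +
        (((1)+(-1/2)*Real.sqrt 2^2 : ℝ)) * (hsym (Sum.inr 7) (Sum.inr 4)) +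
        (((3)+(-1)*Real.sqrt 2+(-1/2)*Real.sqrt 2^2+(1/2)*Real.sqrt 2^3 : ℝ)) * (hdg 0) +
        (((2) : ℝ)) * (hdg 1) +
        (((3)+(-1)*Real.sqrt 2+(-1/2)*Real.sqrt 2^2+(1/2)*Real.sqrt 2^3 : ℝ)) * (hdg 2) +
        (((2) : ℝ)) * (hdg 3) +
        (((3)+(-1)*Real.sqrt 2+(-1/2)*Real.sqrt 2^2+(1/2)*Real.sqrt 2^3 : ℝ)) * (hdg 4) +
        (((2) : ℝ)) * (hdg 5) +
        (((3)+(-1)*Real.sqrt 2+(-1/2)*Real.sqrt 2^2+(1/2)*Real.sqrt 2^3 : ℝ)) * (hdg 6) +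
        (((2) : ℝ)) * (hdg 7) +
        ((((-1)+(-1/2)*Real.sqrt 2 : ℝ)) + (((1/2)+(1/2)*Real.sqrt 2 : ℝ))*X (Sum.inl 0) (Sum.inr 0) + (((1) : ℝ))*X (Sum.inl 0) (Sum.inr 1) + (((1/2)+(1/2)*Real.sqrt 2 : ℝ))*X (Sum.inl 0) (Sum.inr 2) + (((1) : ℝ))*X (Sum.inl 0) (Sum.inr 3) + (((1/2)+(1/2)*Real.sqrt 2 : ℝ))*X (Sum.inl 0) (Sum.inr 4) + (((1) : ℝ))*X (Sum.inl 0) (Sum.inr 5) + (((1/2)+(1/2)*Real.sqrt 2 : ℝ))*X (Sum.inl 0) (Sum.inr 6) + (((1) : ℝ))*X (Sum.inl 0) (Sum.inr 7) + (((-1) : ℝ))*X (Sum.inr 0) (Sum.inr 3) + (((-1) : ℝ))*X (Sum.inr 0) (Sum.inr 5) + (((-1) : ℝ))*X (Sum.inr 1) (Sum.inr 4) + (((-1) : ℝ))*X (Sum.inr 1) (Sum.inr 6) + (((-1) : ℝ))*X (Sum.inr 2) (Sum.inr 5) + (((-1) : ℝ))*X (Sum.inr 2) (Sum.inr 7) +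 (((-1) : ℝ))*X (Sum.inr 3) (Sum.inr 6) + (((-1) : ℝ))*X (Sum.inr 4) (Sum.inr 7)) * hs
    have k0 := mul_nonneg (by linarith : (0:ℝ) ≤ (2 - Real.sqrt 2)/2) (hX.dotProduct_mulVec_nonneg pp)
    have k1 := mul_nonneg (by linarith : (0:ℝ) ≤ (Real.sqrt 2 - 1)/2) (hX.dotProduct_mulVec_nonneg qq1)
    have k2 := mul_nonneg (by linarith : (0:ℝ) ≤ (Real.sqrt 2 - 1)/2) (hX.dotProduct_mulVec_nonneg qq2)
    have k3 := mul_nonneg (by linarith : (0:ℝ) ≤ (2 - Real.sqrt 2)/2) (hX.dotProduct_mulVec_nonneg qq3)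
    have k4 := mul_nonneg (by linarith : (0:ℝ) ≤ (2 - Real.sqrt 2)/2) (hX.dotProduct_mulVec_nonneg qq4)
    linarith [key, k0, k1, k2, k3, k4]
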